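/- arXiv:1003.3991 — 7 statements merged into one kernel-verified Lean document; each statement's English description precedes it below -/
import Mathlib

section
/- For every real θ: γR 1 θ = γ5 * (1 − D θ), where 1 denotes the 2×2 identity matrix. -/
open Real Matrix

/-- The chirality matrix `γ5` in the two-dimensional eigenvalue-pair representation. -/
noncomputable def γ5 : Matrix (Fin 2) (Fin 2) ℝ := !![1, 0; 0, -1]

/-- The overlap Dirac operator on a non-zero eigenvalue pair. -/
noncomputable def D (θ : ℝ) : Matrix (Fin 2) (Fin 2) ℝ :=
  (2 * Real.cos θ) • !![Real.cos θ, Real.sin θ; -Real.sin θ, Real.cos θ]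

/-- The family of right chiral γ-matrices `γ_R^(η)`. -/
noncomputable def γR (η θ : ℝ) : Matrix (Fin 2) (Fin 2) ℝ :=
  !![Real.cos ((1 + η) * (θ - π / 2)), Real.sin ((1 + η) * (θ - π / 2));
     Real.sin ((1 + η) * (θ - π / 2)), -Real.cos ((1 + η) * (θ - π / 2))]

/-- The family of left chiral γ-matrices `γ_L^(η) = γ5 γ_R^(−η) γ5`. -/
noncomputable def γL (η θ : ℝ) : Matrix (Fin 2) (Fin 2) ℝ := γ5 * γR (-η) θ * γ5

/-- Lemma B.2 of the paper: `γ_R^(1) = γ5 (1 − D)`. -/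
theorem γR_one_eq (θ : ℝ) : γR 1 θ = γ5 * (1 - D θ) := by
  have h : (1 + 1) * (θ - π / 2) = 2 * θ - π := by ring
  ext i j
  fin_cases i <;> fin_cases j <;>
    simp [γR, γ5, D, h, Real.cos_sub_pi, Real.sin_sub_pi, Real.cos_two_mul,
      Real.sin_two_mul, Matrix.mul_apply, Fin.sum_univ_two, Matrix.one_apply] <;> ring
end

section
/- For all real η₁, η₂, θ: γL η₁ θ * γL η₂ θ = γ5 * γL (η₂ − η₁ + 1) θ. -/
open Real Matrix

lemma key (a b : ℝ) :
    (!![1, 0; 0, -1] : Matrix (Fin 2) (Fin 2) ℝ) *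
      (!![Real.cos a, Real.sin a; Real.sin a, -Real.cos a] *
        !![Real.cos b, Real.sin b; Real.sin b, -Real.cos b]) =
    !![Real.cos (b - a), Real.sin (b - a); Real.sin (b - a), -Real.cos (b - a)] := by
  ext i j
  fin_cases i <;> fin_cases j <;>
    simp [Matrix.mul_apply, Fin.sum_univ_two, Real.cos_sub, Real.sin_sub] <;> ring

lemma γ5_sq : γ5 * γ5 = 1 := by
  unfold γ5
  ext i j
  fin_cases i <;> fin_cases j <;> simp [Matrix.mul_apply, Fin.sum_univ_two, Matrix.one_apply]

/-- Lemma B.5 of the paper: `γ_L^(η₁) γ_L^(η₂) = γ5 γ_L^(η₂ − η₁ + 1)`. -/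
theorem γL_mul_γL (η₁ η₂ θ : ℝ) :
    γL η₁ θ * γL η₂ θ = γ5 * γL (η₂ - η₁ + 1) θ := by
  unfold γL
  have h : γ5 * γR (-η₁) θ * γ5 * (γ5 * γR (-η₂) θ * γ5) =
      (γ5 * (γR (-η₁) θ * γR (-η₂) θ)) * γ5 := by
    rw [show γ5 * γR (-η₁) θ * γ5 * (γ5 * γR (-η₂) θ * γ5) =
      γ5 * γR (-η₁) θ * (γ5 * γ5) * γR (-η₂) θ * γ5 by noncomm_ring, γ5_sq]
    noncomm_ring
  rw [h]
  rw [show γ5 * (γ5 * γR (-(η₂ - η₁ + 1)) θ * γ5) = (γ5 * γ5) * γR (-(η₂ - η₁ + 1)) θ * γ5 by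
    noncomm_ring, γ5_sq, one_mul]
  congr 1
  unfold γR γ5
  rw [key]
  congr 2 <;> ring
end

section
/- For all real η₁, η₂, θ: γR η₁ θ * γR η₂ θ = γR (2η₁ − η₂) θ * γR η₁ θ, and likewise γL η₁ θ * γL η₂ θ = γL (2η₁ − η₂) θ * γL η₁ θ. -/
open Real Matrix

lemma refl_mul_refl (a b : ℝ) :
    (!![Real.cos a, Real.sin a; Real.sin a, -Real.cos a] *
      !![Real.cos b, Real.sin b; Real.sin b, -Real.cos b] : Matrix (Fin 2) (Fin 2) ℝ) =
    !![Real.cos (a - b), -Real.sin (a - b); Real.sin (a - b), Real.cos (a - b)] := by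
  rw [Real.cos_sub, Real.sin_sub]
  ext i j
  fin_cases i <;> fin_cases j <;>
    simp [Matrix.mul_apply, Fin.sum_univ_succ] <;> ring

lemma γR_mul (η₁ η₂ θ : ℝ) :
    γR η₁ θ * γR η₂ θ =
      !![Real.cos ((η₁ - η₂) * (θ - π / 2)), -Real.sin ((η₁ - η₂) * (θ - π / 2));
         Real.sin ((η₁ - η₂) * (θ - π / 2)), Real.cos ((η₁ - η₂) * (θ - π / 2))] := by
  rw [γR, γR, refl_mul_refl]
  ring_nf

/-- Lemma B.7 of the paper: the exchange relations
`γ_R^(η₁) γ_R^(η₂) = γ_R^(2η₁ − η₂) γ_R^(η₁)` and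
`γ_L^(η₁) γ_L^(η₂) = γ_L^(2η₁ − η₂) γ_L^(η₁)`. -/
theorem γR_γL_exchange (η₁ η₂ θ : ℝ) :
    γR η₁ θ * γR η₂ θ = γR (2 * η₁ - η₂) θ * γR η₁ θ ∧
    γL η₁ θ * γL η₂ θ = γL (2 * η₁ - η₂) θ * γL η₁ θ := by
  have hR : ∀ a b : ℝ, γR a θ * γR b θ = γR (2 * a - b) θ * γR a θ := by
    intro a b
    rw [γR_mul, γR_mul]
    ring_nf
  refine ⟨hR η₁ η₂, ?_⟩
  have h5 : γ5 * γ5 = (1 : Matrix (Fin 2) (Fin 2) ℝ) := by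
    ext i j
    fin_cases i <;> fin_cases j <;> simp [γ5, Matrix.mul_apply, Fin.sum_univ_succ]
  have key := hR (-η₁) (-η₂)
  calc γL η₁ θ * γL η₂ θ
      = γ5 * (γR (-η₁) θ * (γ5 * γ5) * γR (-η₂) θ) * γ5 := by
        simp only [γL]; noncomm_ring
    _ = γ5 * (γR (-η₁) θ * γR (-η₂) θ) * γ5 := by rw [h5]; noncomm_ring
    _ = γ5 * (γR (2 * (-η₁) - -η₂) θ * γR (-η₁) θ) * γ5 := by rw [key]
    _ = γL (2 * η₁ - η₂) θ * γL η₁ θ := by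
        simp only [γL]
        have : -(2 * η₁ - η₂) = 2 * (-η₁) - -η₂ := by ring
        rw [this]; symm
        calc γ5 * γR (2 * (-η₁) - -η₂) θ * γ5 * (γ5 * γR (-η₁) θ * γ5)
            = γ5 * (γR (2 * (-η₁) - -η₂) θ * (γ5 * γ5) * γR (-η₁) θ) * γ5 := by noncomm_ring
          _ = γ5 * (γR (2 * (-η₁) - -η₂) θ * γR (-η₁) θ) * γ5 := by rw [h5]; noncomm_ring
end

section
/- For all real η and θ: γL η θ * D θ + D θ * γR η θ = 0. -/
open Real Matrix

/-- Lemma B.8 of the paper: the Ginsparg-Wilson equation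
`γ_L^(η) D + D γ_R^(η) = 0` holds for the whole family of lattice chiral symmetries. -/
theorem ginsparg_wilson_family (η θ : ℝ) :
    γL η θ * D θ + D θ * γR η θ = 0 := by
  have h1 : (1 + η) * (θ - π / 2) = η * (θ - π / 2) + (θ - π / 2) := by ring
  have h2 : (1 + -η) * (θ - π / 2) = (θ - π / 2) - η * (θ - π / 2) := by ring
  ext i j
  fin_cases i <;> fin_cases j <;>
    simp [γL, γR, γ5, D, Matrix.mul_apply, Fin.sum_univ_succ, h1, h2,
      Real.cos_add, Real.sin_add, Real.cos_sub, Real.sin_sub,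
      Real.cos_sub_pi_div_two, Real.sin_sub_pi_div_two] <;> ring
end

section
/- For all real η and θ: γ5 * γR η θ * D θ = D θ * γ5 * γR η θ. -/
open Real Matrix

/-- Lemma B.9 of the paper (equation (eq:resultneededinCP)):
`γ5 γ_R^(η) D = D γ5 γ_R^(η)`. -/
theorem γ5_γR_commutes_with_D (η θ : ℝ) :
    γ5 * γR η θ * D θ = D θ * (γ5 * γR η θ) := by
  ext i j
  fin_cases i <;> fin_cases j <;>
    simp [γ5, γR, D, Matrix.mul_apply, Fin.sum_univ_succ] <;> ring
end

section
/- For all real η and θ: γ5 * γR (−1−η) θ * γR (−η) θ * γR (−1−η) θ * γ5 = γR η θ. -/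
open Real Matrix

/-- Lemma B.10 of the paper (equation (eq:secondresultneededinCP)):
`γ5 γ_R^(−1−η) γ_R^(−η) γ_R^(−1−η) γ5 = γ_R^(η)`. -/
theorem γR_CP_conjugation (η θ : ℝ) :
    γ5 * γR (-1 - η) θ * γR (-η) θ * γR (-1 - η) θ * γ5 = γR η θ := by
  have hc : (1 + η) * (θ - π / 2) =
      (1 + -η) * (θ - π / 2) -
        ((1 + (-1 - η)) * (θ - π / 2) + (1 + (-1 - η)) * (θ - π / 2)) := by ring
  ext i j
  fin_cases i <;> fin_cases j <;>
    simp [γ5, γR, Matrix.mul_apply, Fin.sum_univ_two, hc, Real.cos_sub, Real.sin_sub,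
      Real.cos_add, Real.sin_add] <;> ring
end

section
/- For all real η and θ: γR (η − 2) θ = (1 − D θ) * γR η θ, where 1 denotes the 2×2 identity matrix. -/
open Real Matrix

/-- The recursion `γ_R^(η−2) = (1 − D) γ_R^(η)` used in section 5 of the paper
to reduce the locality analysis to the cases `η = 1` and `η = 0`. -/
theorem γR_recursion (η θ : ℝ) :
    γR (η - 2) θ = (1 - D θ) * γR η θ := by
  have h1 : (1 + (η - 2)) * (θ - π / 2) = (1 + η) * (θ - π / 2) - (2 * θ - π) := by ring
  have hc : Real.cos (2 * θ - π) = -(2 * Real.cos θ ^ 2 - 1) := by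
    rw [Real.cos_sub, Real.cos_pi, Real.sin_pi, Real.cos_two_mul]; ring
  have hs : Real.sin (2 * θ - π) = -(2 * Real.sin θ * Real.cos θ) := by
    rw [Real.sin_sub, Real.cos_pi, Real.sin_pi, Real.sin_two_mul]; ring
  ext i j
  fin_cases i <;> fin_cases j <;>
    simp [γR, D, Matrix.mul_apply, Fin.sum_univ_succ, Matrix.one_apply, h1,
      Real.cos_sub, Real.sin_sub, hc, hs] <;> ring
end
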